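/- For n ≥ 7, the graph G_n does not contain K_{3,3} as a subgraph. -/

import Mathlib

open SimpleGraph

/-- `H` is a minor of `G`: there are nonempty, pairwise disjoint, connected branch
sets in `G`, one for each vertex of `H`, with an edge of `G` between the branch
sets of any two adjacent vertices of `H`. -/
def IsMinor {W V : Type*} (H : SimpleGraph W) (G : SimpleGraph V) : Prop :=
  ∃ f : W → Set V,
    (∀ w, (f w).Nonempty) ∧
    (∀ w, (G.induce (f w)).Connected) ∧
    (Pairwise fun w₁ w₂ => Disjoint (f w₁) (f w₂)) ∧
    ∀ ⦃a b⦄, H.Adj a b → ∃ u ∈ f a, ∃ v ∈ f b, G.Adj u v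

/-- Planarity, via Wagner's theorem: a graph is planar iff it has neither a `K₅`
minor nor a `K₃,₃` minor. -/
def IsPlanar {V : Type*} (G : SimpleGraph V) : Prop :=
  ¬ IsMinor (completeGraph (Fin 5)) G ∧
  ¬ IsMinor (completeBipartiteGraph (Fin 3) (Fin 3)) G

/-- The join of two graphs: their disjoint union plus all edges in between. -/
def Join {α β : Type*} (G : SimpleGraph α) (H : SimpleGraph β) :
    SimpleGraph (α ⊕ β) where
  Adj x y := match x, y with
    | .inl a, .inl b => G.Adj a b
    | .inl _, .inr _ => True
    | .inr _, .inl _ => True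
    | .inr a, .inr b => H.Adj a b
  symm := ⟨by rintro (a | a) (b | b) h <;> first | exact h.symm | trivial⟩
  loopless := ⟨by rintro (a | a) h <;> exact h.ne rfl⟩

/-- The graph `Gₙ`: a cycle on `n - 2` vertices, two poles `p = Sum.inr 0` and
`q = Sum.inr 1` adjacent to all cycle vertices, and the pole edge `pq`. -/
def Gn (n : ℕ) : SimpleGraph (Fin (n - 2) ⊕ Fin 2) :=
  Join (cycleGraph (n - 2)) (⊤ : SimpleGraph (Fin 2))

/- ### Auxiliary lemmas -/

lemma four_ne_zero_fin {m : ℕ} [NeZero m] (hm : 5 ≤ m) : (4 : Fin m) ≠ 0 := by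
  intro h
  have h3 : 4 % m = 0 := congrArg Fin.val h
  rw [Nat.mod_eq_of_lt (by omega)] at h3
  exact absurd h3 (by omega)

open Fin.CommRing in
/-- No vertex of the cycle has three distinct neighbours. -/
lemma noThree {m : ℕ} [NeZero m] {a b1 b2 b3 : Fin m}
    (h12 : b1 ≠ b2) (h13 : b1 ≠ b3) (h23 : b2 ≠ b3)
    (h1 : b1 - a = 1 ∨ a - b1 = 1)
    (h2 : b2 - a = 1 ∨ a - b2 = 1)
    (h3 : b3 - a = 1 ∨ a - b3 = 1) : False := by
  rcases h1 with h1 | h1 <;> rcases h2 with h2 | h2 <;> rcases h3 with h3 | h3 <;>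
    first
    | exact h12 (by linear_combination h1 - h2)
    | exact h12 (by linear_combination h2 - h1)
    | exact h13 (by linear_combination h1 - h3)
    | exact h13 (by linear_combination h3 - h1)
    | exact h23 (by linear_combination h2 - h3)
    | exact h23 (by linear_combination h3 - h2)

open Fin.CommRing in
/-- The cycle (length ≥ 5) has no `C₄`-like configuration. -/
lemma noFour {m : ℕ} [NeZero m] (hm : 5 ≤ m) {a1 a2 b1 b2 : Fin m}
    (ha : a1 ≠ a2) (hb : b1 ≠ b2)
    (h11 : a1 - b1 = 1 ∨ b1 - a1 = 1)
    (h12 : a1 - b2 = 1 ∨ b2 - a1 = 1)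
    (h21 : a2 - b1 = 1 ∨ b1 - a2 = 1)
    (h22 : a2 - b2 = 1 ∨ b2 - a2 = 1) : False := by
  have h4 := four_ne_zero_fin (m := m) hm
  rcases h11 with h11 | h11 <;> rcases h12 with h12 | h12 <;>
    rcases h21 with h21 | h21 <;> rcases h22 with h22 | h22 <;>
    first
    | exact hb (by linear_combination h11 - h12)
    | exact hb (by linear_combination h12 - h11)
    | exact hb (by linear_combination h21 - h22)
    | exact hb (by linear_combination h22 - h21)
    | exact ha (by linear_combination h11 - h21)
    | exact ha (by linear_combination h21 - h11)
    | exact ha (by linear_combination h12 - h22)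
    | exact ha (by linear_combination h22 - h12)
    | exact h4 (by linear_combination h11 + h12 + h21 + h22)
    | exact h4 (by linear_combination -h11 - h12 - h21 - h22)

lemma fin2_three : ∀ x y z : Fin 2, x = y ∨ x = z ∨ y = z := by decide

/-- Among three values in `Fin m ⊕ Fin 2`, either two (at distinct indices) lie in
the cycle part, or two lie in the pole part. -/
lemma classify3 {m : ℕ} (h : Fin 3 → Fin m ⊕ Fin 2) :
    (∃ i j a b, i ≠ j ∧ h i = Sum.inl a ∧ h j = Sum.inl b) ∨
    (∃ i j x y, i ≠ j ∧ h i = Sum.inr x ∧ h j = Sum.inr y) := by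
  rcases e0 : h 0 with a0 | x0 <;> rcases e1 : h 1 with a1 | x1 <;>
    rcases e2 : h 2 with a2 | x2 <;>
    first
    | exact Or.inl ⟨0, 1, a0, a1, by decide, e0, e1⟩
    | exact Or.inl ⟨0, 2, a0, a2, by decide, e0, e2⟩
    | exact Or.inl ⟨1, 2, a1, a2, by decide, e1, e2⟩
    | exact Or.inr ⟨0, 1, x0, x1, by decide, e0, e1⟩
    | exact Or.inr ⟨0, 2, x0, x2, by decide, e0, e2⟩
    | exact Or.inr ⟨1, 2, x1, x2, by decide, e1, e2⟩

section Core

variable {m : ℕ} [NeZero m]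

/-- If the right side of the bipartition has two poles, we get a contradiction. -/
lemma asymCase (hm : 5 ≤ m) (g : Fin 3 ⊕ Fin 3 → Fin m ⊕ Fin 2)
    (hinj : Function.Injective g)
    (hadj : ∀ i j a b, g (Sum.inl i) = Sum.inl a → g (Sum.inr j) = Sum.inl b →
      a - b = 1 ∨ b - a = 1)
    (i j : Fin 3) (hij : i ≠ j) (x y : Fin 2)
    (hx : g (Sum.inr i) = Sum.inr x) (hy : g (Sum.inr j) = Sum.inr y) : False := by
  have hxy : x ≠ y := by
    intro e
    exact hij (Sum.inr_injective (hinj (hx.trans (e ▸ hy.symm))))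
  -- any other pole value would give three distinct elements of `Fin 2`
  have nopole : ∀ (u : Fin 3 ⊕ Fin 3) (z : Fin 2),
      g u = Sum.inr z → u = Sum.inr i ∨ u = Sum.inr j := by
    intro u z hz
    by_contra hcon
    push_neg at hcon
    have hzx : z ≠ x := fun e => hcon.1 (hinj (hz.trans (e ▸ hx.symm)))
    have hzy : z ≠ y := fun e => hcon.2 (hinj (hz.trans (e ▸ hy.symm)))
    rcases fin2_three z x y with h | h | h
    · exact hzx h
    · exact hzy h
    · exact hxy h
  -- all three left vertices are on the cycle
  have hleft : ∀ l : Fin 3, ∃ a, g (Sum.inl l) = Sum.inl a := by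
    intro l
    rcases e : g (Sum.inl l) with a | z
    · exact ⟨a, rfl⟩
    · rcases nopole _ _ e with h | h <;> simp at h
  -- the third right vertex is on the cycle
  obtain ⟨k, hki, hkj⟩ : ∃ k : Fin 3, k ≠ i ∧ k ≠ j := by
    have : ∀ i j : Fin 3, i ≠ j → ∃ k : Fin 3, k ≠ i ∧ k ≠ j := by decide
    exact this i j hij
  obtain ⟨b, hb⟩ : ∃ b, g (Sum.inr k) = Sum.inl b := by
    rcases e : g (Sum.inr k) with b | z
    · exact ⟨b, rfl⟩
    · rcases nopole _ _ e with h | h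
      · exact absurd (Sum.inr_injective h) hki
      · exact absurd (Sum.inr_injective h) hkj
  obtain ⟨a0, ha0⟩ := hleft 0
  obtain ⟨a1, ha1⟩ := hleft 1
  obtain ⟨a2, ha2⟩ := hleft 2
  have d01 : a0 ≠ a1 := fun e => by
    have := hinj (ha0.trans (e ▸ ha1.symm)); simp at this
  have d02 : a0 ≠ a2 := fun e => by
    have := hinj (ha0.trans (e ▸ ha2.symm)); simp at this
  have d12 : a1 ≠ a2 := fun e => by
    have := hinj (ha1.trans (e ▸ ha2.symm)); simp at this
  exact noThree (a := b) d01 d02 d12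
    (hadj 0 k a0 b ha0 hb) (hadj 1 k a1 b ha1 hb) (hadj 2 k a2 b ha2 hb)

lemma core (hm : 5 ≤ m) (g : Fin 3 ⊕ Fin 3 → Fin m ⊕ Fin 2)
    (hinj : Function.Injective g)
    (hadj : ∀ i j a b, g (Sum.inl i) = Sum.inl a → g (Sum.inr j) = Sum.inl b →
      a - b = 1 ∨ b - a = 1) : False := by
  rcases classify3 (fun i => g (Sum.inl i)) with
      ⟨i, j, a1, a2, hij, h1, h2⟩ | ⟨i, j, x, y, hij, h1, h2⟩
  · rcases classify3 (fun i => g (Sum.inr i)) with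
        ⟨i', j', b1, b2, hij', h1', h2'⟩ | ⟨i', j', x, y, hij', h1', h2'⟩
    · have ha : a1 ≠ a2 := fun e => hij (Sum.inl_injective (hinj (h1.trans (e ▸ h2.symm))))
      have hb : b1 ≠ b2 := fun e => hij' (Sum.inr_injective (hinj (h1'.trans (e ▸ h2'.symm))))
      exact noFour hm ha hb (hadj i i' a1 b1 h1 h1') (hadj i j' a1 b2 h1 h2')
        (hadj j i' a2 b1 h2 h1') (hadj j j' a2 b2 h2 h2')
    · exact asymCase hm g hinj hadj i' j' hij' x y h1' h2'
  · -- swap the two sides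
    set g' : Fin 3 ⊕ Fin 3 → Fin m ⊕ Fin 2 := fun u => g u.swap with hg'
    have hinj' : Function.Injective g' := by
      intro u v h
      have h2 := congrArg Sum.swap (hinj h)
      rwa [Sum.swap_swap, Sum.swap_swap] at h2
    have hadj' : ∀ i j a b, g' (Sum.inl i) = Sum.inl a → g' (Sum.inr j) = Sum.inl b →
        a - b = 1 ∨ b - a = 1 := by
      intro i j a b ha hb
      exact Or.symm (hadj j i b a hb ha)
    exact asymCase hm g' hinj' hadj' i j hij x y h1 h2

end Core

lemma cyc_adj {m : ℕ} [NeZero m] (hm : 2 ≤ m) {a b : Fin m} (h : (cycleGraph m).Adj a b) :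
    a - b = 1 ∨ b - a = 1 := by
  obtain ⟨k, rfl⟩ : ∃ k, m = k + 2 := ⟨m - 2, by omega⟩
  exact cycleGraph_adj.mp h

/-- For `n ≥ 7`, the graph `Gₙ` does not contain `K₃,₃` as a subgraph. -/
theorem Gn_no_K33_subgraph (n : ℕ) (hn : 7 ≤ n) :
    ¬ ∃ f : (Fin 3 ⊕ Fin 3) ↪ (Fin (n - 2) ⊕ Fin 2),
      ∀ a b, (completeBipartiteGraph (Fin 3) (Fin 3)).Adj a b →
        (Gn n).Adj (f a) (f b) := by
  rintro ⟨f, hf⟩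
  haveI : NeZero (n - 2) := ⟨by omega⟩
  refine core (m := n - 2) (by omega) f f.injective ?_
  intro i j a b ha hb
  have h := hf (Sum.inl i) (Sum.inr j) (by simp)
  rw [ha, hb] at h
  exact cyc_adj (by omega) h
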